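/- Let A be an n×n real symmetric positive semidefinite matrix with eigenvalues λ_1 ≥ … ≥ λ_n, and let X ∈ ℝ^{n×k} (1 ≤ k ≤ n) be such that XᵀAX is invertible. Then λ_k > 0, σ_k(XᵀA^{1/2}) > 0, and ‖A X (XᵀAX)^{-1}‖₂ ≤ κ(A_k)^{1/2} · η_k, where κ(A_k) = λ_1/λ_k is the condition number of the best rank-k approximation A_k of A and η_k = λ_k^{1/2} / σ_k(XᵀA^{1/2}). -/

import Mathlib

open Matrix

open scoped ComplexOrder in
/-- The positive semidefinite square root of a positive semidefinite matrix
(as `Matrix.PosSemidef.sqrt` was defined in Mathlib of December 2024). -/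
noncomputable def Matrix.PosSemidef.sqrt {n 𝕜 : Type*} [Fintype n] [DecidableEq n] [RCLike 𝕜]
    {A : Matrix n n 𝕜} (hA : A.PosSemidef) : Matrix n n 𝕜 :=
  hA.1.eigenvectorUnitary.1 * diagonal ((↑) ∘ (√·) ∘ hA.1.eigenvalues) *
    (star hA.1.eigenvectorUnitary : Matrix n n 𝕜)

/-- The spectral norm (largest singular value) of a real matrix,
as the `ℓ²→ℓ²` operator norm. -/
noncomputable def spectralNorm' {m n : ℕ} (M : Matrix (Fin m) (Fin n) ℝ) : ℝ :=
  ‖LinearMap.toContinuousLinearMap (Matrix.toEuclideanLin M)‖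

/-- For a `k × n` matrix `M` with `k ≤ n`, the `k`-th largest (i.e. the smallest)
singular value of `M`: `σ_k(M) = min_{‖u‖ = 1} ‖Mᵀ u‖`. -/
noncomputable def sigmaLast {k n : ℕ} (M : Matrix (Fin k) (Fin n) ℝ) : ℝ :=
  ⨅ u : Metric.sphere (0 : EuclideanSpace ℝ (Fin k)) 1,
    ‖Matrix.toEuclideanLin Mᵀ (u : EuclideanSpace ℝ (Fin k))‖

open scoped Matrix.Norms.L2Operator

namespace NAux

lemma sqrt_posSemidef' {n : ℕ} {A : Matrix (Fin n) (Fin n) ℝ} (hA : A.PosSemidef) :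
    hA.sqrt.PosSemidef := by
  unfold Matrix.PosSemidef.sqrt
  have hd : (diagonal (RCLike.ofReal ∘ (√·) ∘ hA.1.eigenvalues) : Matrix (Fin n) (Fin n) ℝ).PosSemidef := by
    rw [posSemidef_diagonal_iff]; intro i; simp [Real.sqrt_nonneg]
  have := hd.mul_mul_conjTranspose_same (hA.1.eigenvectorUnitary : Matrix (Fin n) (Fin n) ℝ)
  have e : ((star hA.1.eigenvectorUnitary : unitaryGroup (Fin n) ℝ) : Matrix (Fin n) (Fin n) ℝ) =
      (hA.1.eigenvectorUnitary : Matrix (Fin n) (Fin n) ℝ)ᴴ := by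
    rw [Unitary.coe_star, Matrix.star_eq_conjTranspose]
  rw [Matrix.star_eq_conjTranspose]; exact this

lemma sqrt_mul_self' {n : ℕ} {A : Matrix (Fin n) (Fin n) ℝ} (hA : A.PosSemidef) :
    hA.sqrt * hA.sqrt = A := by
  unfold Matrix.PosSemidef.sqrt
  set U := hA.1.eigenvectorUnitary
  have hU : (star U : Matrix (Fin n) (Fin n) ℝ) * (U : Matrix (Fin n) (Fin n) ℝ) = 1 :=
    Unitary.coe_star_mul_self U
  conv_rhs => rw [hA.1.spectral_theorem]
  rw [Unitary.conjStarAlgAut_apply]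
  calc _ = (U : Matrix (Fin n) (Fin n) ℝ) * (diagonal (RCLike.ofReal ∘ (√·) ∘ hA.1.eigenvalues) *
        ((star U : Matrix (Fin n) (Fin n) ℝ) * (U : Matrix (Fin n) (Fin n) ℝ)) * diagonal (RCLike.ofReal ∘ (√·) ∘ hA.1.eigenvalues)) *
        (star U : Matrix (Fin n) (Fin n) ℝ) := by simp only [Matrix.mul_assoc]
    _ = _ := by
      rw [hU, Matrix.mul_one, diagonal_mul_diagonal]
      congr 2
      ext i j
      by_cases h : i = j <;> simp [h, Real.mul_self_sqrt (hA.eigenvalues_nonneg j)]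

noncomputable def f {m p : ℕ} (M : Matrix (Fin m) (Fin p) ℝ) :
    EuclideanSpace ℝ (Fin p) →ₗ[ℝ] EuclideanSpace ℝ (Fin m) := Matrix.toEuclideanLin M

lemma f_mul {m p q : ℕ} (M : Matrix (Fin m) (Fin p) ℝ) (N : Matrix (Fin p) (Fin q) ℝ)
    (x : EuclideanSpace ℝ (Fin q)) : f (M * N) x = f M (f N x) := by
  simp [f, Matrix.toEuclideanLin_apply, Matrix.mulVec_mulVec]

lemma f_one {m : ℕ} (x : EuclideanSpace ℝ (Fin m)) : f (1 : Matrix (Fin m) (Fin m) ℝ) x = x := by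
  simp [f, Matrix.toEuclideanLin_apply]

lemma inner_f_transpose {m p : ℕ} (M : Matrix (Fin m) (Fin p) ℝ)
    (x : EuclideanSpace ℝ (Fin m)) (y : EuclideanSpace ℝ (Fin p)) :
    (inner ℝ (f Mᵀ x) y : ℝ) = inner ℝ x (f M y) := by
  have h : f Mᵀ = LinearMap.adjoint (f M) := by
    rw [f, f, ← Matrix.conjTranspose_eq_transpose_of_trivial,
      Matrix.toEuclideanLin_conjTranspose_eq_adjoint]
  rw [h, LinearMap.adjoint_inner_left]

lemma inner_f_diagonal_le {m : ℕ} (d : Fin m → ℝ) (c : ℝ) (hc : ∀ i, d i ≤ c)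
    (y : EuclideanSpace ℝ (Fin m)) :
    (inner ℝ y (f (Matrix.diagonal d) y) : ℝ) ≤ c * ‖y‖ ^ 2 := by
  have h1 : (inner ℝ y (f (Matrix.diagonal d) y) : ℝ) = ∑ i, d i * (y i * y i) := by
    simp [f, Matrix.toEuclideanLin_apply, PiLp.inner_apply, RCLike.inner_apply,
      Matrix.mulVec_diagonal, mul_comm, mul_left_comm]
  have h2 : (‖y‖ : ℝ) ^ 2 = ∑ i, y i * y i := by
    rw [EuclideanSpace.norm_eq, Real.sq_sqrt (Finset.sum_nonneg fun i _ => sq_nonneg _)]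
    exact Finset.sum_congr rfl fun i _ => by rw [Real.norm_eq_abs, sq_abs, sq]
  rw [h1, h2, Finset.mul_sum]
  exact Finset.sum_le_sum fun i _ => mul_le_mul_of_nonneg_right (hc i) (mul_self_nonneg _)

lemma sigma_pos_and_lb {n k : ℕ} (hk : 1 ≤ k)
    (B : Matrix (Fin k) (Fin n) ℝ) (G : Matrix (Fin k) (Fin k) ℝ)
    (hGBB : B * Bᵀ = G) (hXAX : IsUnit G) :
    0 < sigmaLast B ∧ ∀ w : EuclideanSpace ℝ (Fin k), sigmaLast B * ‖w‖ ≤ ‖f Bᵀ w‖ := by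
  classical
  have hGdet : IsUnit G.det := (Matrix.isUnit_iff_isUnit_det G).mp hXAX
  set φ : EuclideanSpace ℝ (Fin k) → ℝ := fun u => ‖f Bᵀ u‖ with hφ
  have hφcont : Continuous φ := ((f Bᵀ).toContinuousLinearMap.continuous).norm
  have hbdd : BddBelow (Set.range fun u : Metric.sphere (0 : EuclideanSpace ℝ (Fin k)) 1 =>
      φ (u : EuclideanSpace ℝ (Fin k))) := by
    refine ⟨0, ?_⟩
    rintro x ⟨u, rfl⟩
    exact norm_nonneg _
  haveI : Nonempty (Fin k) := ⟨⟨0, hk⟩⟩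
  haveI : Nontrivial (EuclideanSpace ℝ (Fin k)) := inferInstance
  have hsphne : (Metric.sphere (0 : EuclideanSpace ℝ (Fin k)) 1).Nonempty :=
    NormedSpace.sphere_nonempty.mpr zero_le_one
  obtain ⟨u₀, hu₀, hmin⟩ := (isCompact_sphere (0 : EuclideanSpace ℝ (Fin k)) 1).exists_isMinOn
    hsphne hφcont.continuousOn
  haveI := hsphne.to_subtype
  have hinf_ge : φ u₀ ≤ sigmaLast B := by
    refine le_ciInf fun u => ?_
    exact hmin u.2
  have hinf_le : ∀ u : Metric.sphere (0 : EuclideanSpace ℝ (Fin k)) 1,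
      sigmaLast B ≤ φ (u : EuclideanSpace ℝ (Fin k)) := fun u => ciInf_le hbdd u
  have hσpos : 0 < φ u₀ := by
    rcases lt_or_eq_of_le (norm_nonneg (f Bᵀ u₀)) with h | h
    · exact h
    exfalso
    have hBu : f Bᵀ u₀ = 0 := by
      have := h.symm
      exact norm_eq_zero.mp this
    have hGu : f G u₀ = 0 := by
      rw [← hGBB, f_mul, hBu, map_zero]
    have : u₀ = 0 := by
      have h2 : f G⁻¹ (f G u₀) = u₀ := by
        rw [← f_mul, Matrix.nonsing_inv_mul G hGdet, f_one]
      rw [hGu, map_zero] at h2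
      exact h2.symm
    rw [this] at hu₀
    simp at hu₀
  constructor
  · exact lt_of_lt_of_le hσpos hinf_ge
  · intro w
    rcases eq_or_ne w 0 with rfl | hw
    · simp
    have hwn : ‖w‖ ≠ 0 := norm_ne_zero_iff.mpr hw
    have hmem : (‖w‖⁻¹ • w) ∈ Metric.sphere (0 : EuclideanSpace ℝ (Fin k)) 1 := by
      simp [norm_smul, abs_of_nonneg (inv_nonneg.mpr (norm_nonneg w)),
        inv_mul_cancel₀ hwn]
    have := hinf_le ⟨_, hmem⟩
    simp only [hφ, _root_.map_smul, norm_smul, norm_inv, norm_norm, Real.norm_eq_abs,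
      abs_of_nonneg (norm_nonneg w)] at this
    calc sigmaLast B * ‖w‖ ≤ (‖w‖⁻¹ * ‖f Bᵀ w‖) * ‖w‖ :=
          mul_le_mul_of_nonneg_right this (norm_nonneg w)
      _ = ‖f Bᵀ w‖ := by field_simp

lemma norm_sqrt_le {n : ℕ} (A S : Matrix (Fin n) (Fin n) ℝ)
    (lam : Fin n → ℝ) (W : Matrix (Fin n) (Fin n) ℝ) (hW : Wᵀ * W = 1)
    (hAeig : A = W * Matrix.diagonal lam * Wᵀ)
    (hSsymm : Sᵀ = S) (hSS : S * S = A) (c : ℝ) (hc0 : 0 ≤ c) (hc : ∀ i, lam i ≤ c) :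
    ‖S‖ ≤ Real.sqrt c := by
  rw [Matrix.l2_opNorm_def]
  refine ContinuousLinearMap.opNorm_le_bound _ (Real.sqrt_nonneg c) fun x => ?_
  have hWWt : W * Wᵀ = 1 := mul_eq_one_comm.mp hW
  have key : ∀ z : EuclideanSpace ℝ (Fin n), (inner ℝ z (f A z) : ℝ) ≤ c * ‖z‖ ^ 2 := by
    intro z
    have hy : ‖f Wᵀ z‖ ^ 2 = ‖z‖ ^ 2 := by
      rw [← real_inner_self_eq_norm_sq, ← real_inner_self_eq_norm_sq]
      rw [inner_f_transpose, ← f_mul, hWWt, f_one]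
    have : (inner ℝ z (f A z) : ℝ) = inner ℝ (f Wᵀ z) (f (Matrix.diagonal lam) (f Wᵀ z)) := by
      rw [hAeig, f_mul, f_mul, ← inner_f_transpose W z]
    rw [this]
    calc (inner ℝ (f Wᵀ z) (f (Matrix.diagonal lam) (f Wᵀ z)) : ℝ)
        ≤ c * ‖f Wᵀ z‖ ^ 2 := inner_f_diagonal_le lam c hc _
      _ = c * ‖z‖ ^ 2 := by rw [hy]
  have hsq : ‖f S x‖ ^ 2 ≤ c * ‖x‖ ^ 2 := by
    rw [← real_inner_self_eq_norm_sq]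
    have h := inner_f_transpose S x (f S x)
    rw [hSsymm] at h
    rw [h, ← f_mul, hSS]
    exact key x
  have : ‖f S x‖ ≤ Real.sqrt c * ‖x‖ := by
    have h1 : ‖f S x‖ = Real.sqrt (‖f S x‖ ^ 2) := (Real.sqrt_sq (norm_nonneg _)).symm
    rw [h1]
    calc Real.sqrt (‖f S x‖ ^ 2) ≤ Real.sqrt (c * ‖x‖ ^ 2) := Real.sqrt_le_sqrt hsq
      _ = Real.sqrt c * ‖x‖ := by
          rw [Real.sqrt_mul hc0, Real.sqrt_sq (norm_nonneg _)]
  exact this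

lemma norm_pinv_le {n k : ℕ}
    (B : Matrix (Fin k) (Fin n) ℝ) (G : Matrix (Fin k) (Fin k) ℝ)
    (hGBB : B * Bᵀ = G) (hGdet : IsUnit G.det) (σ : ℝ) (hσ : 0 < σ)
    (hσlb : ∀ w : EuclideanSpace ℝ (Fin k), σ * ‖w‖ ≤ ‖f Bᵀ w‖) :
    ‖Bᵀ * G⁻¹‖ ≤ 1 / σ := by
  rw [Matrix.l2_opNorm_def]
  refine ContinuousLinearMap.opNorm_le_bound _ (by positivity) fun u => ?_
  show ‖f (Bᵀ * G⁻¹) u‖ ≤ 1 / σ * ‖u‖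
  set w : EuclideanSpace ℝ (Fin k) := f G⁻¹ u with hw
  have hv : f (Bᵀ * G⁻¹) u = f Bᵀ w := by rw [f_mul]
  rw [hv]
  have key1 : ‖f Bᵀ w‖ ^ 2 = inner ℝ w u := by
    rw [← real_inner_self_eq_norm_sq]
    have h := inner_f_transpose B w (f Bᵀ w)
    rw [h, ← f_mul, hGBB, hw, ← f_mul, Matrix.mul_nonsing_inv G hGdet, f_one]
  have key2 : ‖f Bᵀ w‖ ^ 2 ≤ ‖w‖ * ‖u‖ := by
    rw [key1]; exact real_inner_le_norm w u
  have hwu : σ ^ 2 * ‖w‖ ≤ ‖u‖ := by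
    rcases eq_or_ne w 0 with h0 | h0
    · simp [h0]
    · have hwpos : 0 < ‖w‖ := norm_pos_iff.mpr h0
      have h1 : (σ * ‖w‖) ^ 2 ≤ ‖f Bᵀ w‖ ^ 2 := by
        have := hσlb w
        exact pow_le_pow_left₀ (by positivity) this 2
      have h2 : σ ^ 2 * ‖w‖ ^ 2 ≤ ‖w‖ * ‖u‖ := by
        calc σ ^ 2 * ‖w‖ ^ 2 = (σ * ‖w‖) ^ 2 := by ring
          _ ≤ ‖f Bᵀ w‖ ^ 2 := h1
          _ ≤ ‖w‖ * ‖u‖ := key2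
      nlinarith
  have hfin : ‖f Bᵀ w‖ ^ 2 ≤ (1 / σ * ‖u‖) ^ 2 := by
    calc ‖f Bᵀ w‖ ^ 2 ≤ ‖w‖ * ‖u‖ := key2
      _ ≤ (‖u‖ / σ ^ 2) * ‖u‖ := by
          apply mul_le_mul_of_nonneg_right _ (norm_nonneg u)
          rw [le_div_iff₀ (by positivity), mul_comm]
          exact hwu
      _ = (1 / σ * ‖u‖) ^ 2 := by field_simp
  have := Real.sqrt_le_sqrt hfin
  rwa [Real.sqrt_sq (norm_nonneg _), Real.sqrt_sq (by positivity)] at this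

end NAux

open NAux

/-- Let `A` be an `n×n` real symmetric positive semidefinite matrix with eigenvalues
`λ_1 ≥ … ≥ λ_n` (eigendecomposition `A = W diag(λ) Wᵀ` with `W` orthogonal), and let
`X ∈ ℝ^{n×k}` (`1 ≤ k ≤ n`) be such that `XᵀAX` is invertible. Then `λ_k > 0`,
`σ_k(XᵀA^{1/2}) > 0`, and
`‖A X (XᵀAX)⁻¹‖₂ ≤ κ(A_k)^{1/2} · η_k = (λ_1/λ_k)^{1/2} · λ_k^{1/2}/σ_k(XᵀA^{1/2})`. -/
theorem stmt0 {n k : ℕ} (hk : 1 ≤ k) (hkn : k ≤ n)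
    (A : Matrix (Fin n) (Fin n) ℝ) (hA : A.PosSemidef)
    (lam : Fin n → ℝ) (hlam : Antitone lam)
    (W : Matrix (Fin n) (Fin n) ℝ) (hW : Wᵀ * W = 1)
    (hAeig : A = W * Matrix.diagonal lam * Wᵀ)
    (X : Matrix (Fin n) (Fin k) ℝ)
    (hXAX : IsUnit (Xᵀ * A * X)) :
    0 < lam ⟨k - 1, by omega⟩ ∧
    0 < sigmaLast (Xᵀ * hA.sqrt) ∧
    spectralNorm' (A * X * (Xᵀ * A * X)⁻¹) ≤
      Real.sqrt (lam ⟨0, by omega⟩ / lam ⟨k - 1, by omega⟩) *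
        (Real.sqrt (lam ⟨k - 1, by omega⟩) / sigmaLast (Xᵀ * hA.sqrt)) := by
  classical
  set i0 : Fin n := ⟨0, by omega⟩ with hi0
  set ik : Fin n := ⟨k - 1, by omega⟩ with hik
  -- basic eigenvalue facts
  have hDiag : Matrix.diagonal lam = Wᵀ * A * W := by
    rw [hAeig]
    calc Matrix.diagonal lam = (Wᵀ * W) * Matrix.diagonal lam * (Wᵀ * W) := by rw [hW]; simp
      _ = Wᵀ * (W * Matrix.diagonal lam * Wᵀ) * W := by simp only [Matrix.mul_assoc]
  have hDpsd : (Matrix.diagonal lam).PosSemidef := by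
    rw [hDiag, ← Matrix.conjTranspose_eq_transpose_of_trivial]
    exact hA.conjTranspose_mul_mul_same W
  have hlam_nonneg : ∀ i, 0 ≤ lam i := posSemidef_diagonal_iff.mp hDpsd
  -- positivity of `lam ik`
  have hlamk : 0 < lam ik := by
    rcases lt_or_eq_of_le (hlam_nonneg ik) with h | h
    · exact h
    exfalso
    have h1 : (Xᵀ * A * X).rank = k := by
      rw [Matrix.rank_of_isUnit _ hXAX, Fintype.card_fin]
    have h2 : (Xᵀ * A * X).rank ≤ (Matrix.diagonal lam).rank := by
      have hEq : Xᵀ * A * X = (Xᵀ * W * Matrix.diagonal lam) * (Wᵀ * X) := by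
        rw [hAeig]; simp only [Matrix.mul_assoc]
      rw [hEq]
      exact (Matrix.rank_mul_le_left _ _).trans (Matrix.rank_mul_le_right _ _)
    have h3 : (Matrix.diagonal lam).rank ≤ k - 1 := by
      rw [Matrix.rank_diagonal]
      have hlt : ∀ i : {i : Fin n // lam i ≠ 0}, (i : Fin n).val < k - 1 := by
        rintro ⟨i, hi⟩
        by_contra hge
        push_neg at hge
        have h4 : lam i ≤ lam ik := hlam (by simpa [hik, Fin.le_def] using hge)
        have : lam i = 0 := le_antisymm (h4.trans_eq h.symm) (hlam_nonneg i)
        exact hi this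
      have hinj : Function.Injective
          (fun i : {i : Fin n // lam i ≠ 0} => (⟨(i : Fin n).val, hlt i⟩ : Fin (k-1))) := by
        rintro ⟨i, hi⟩ ⟨j, hj⟩ hij
        simp only [Fin.mk.injEq] at hij
        exact Subtype.ext (Fin.ext hij)
      simpa using Fintype.card_le_of_injective _ hinj
    omega
  -- setup: square root and `B`
  set S : Matrix (Fin n) (Fin n) ℝ := hA.sqrt with hSdef
  have hSps : S.PosSemidef := sqrt_posSemidef' hA
  have hSsymm : Sᵀ = S := by
    rw [← Matrix.conjTranspose_eq_transpose_of_trivial]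
    exact hSps.isHermitian
  have hSS : S * S = A := sqrt_mul_self' hA
  set B : Matrix (Fin k) (Fin n) ℝ := Xᵀ * S with hBdef
  set G : Matrix (Fin k) (Fin k) ℝ := Xᵀ * A * X with hGdef
  have hBt : Bᵀ = S * X := by
    rw [hBdef, Matrix.transpose_mul, hSsymm, Matrix.transpose_transpose]
  have hGBB : B * Bᵀ = G := by
    rw [hBdef, hBt, hGdef, ← hSS]
    simp only [Matrix.mul_assoc]
  have hGdet : IsUnit G.det := (Matrix.isUnit_iff_isUnit_det G).mp hXAX
  -- sigma positivity and lower bound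
  obtain ⟨hσpos, hσlb⟩ := sigma_pos_and_lb hk B G hGBB hXAX
  set σ : ℝ := sigmaLast B with hσdef
  -- the two norm bounds
  have hlamle : ∀ i, lam i ≤ lam i0 := fun i => hlam (by simp [hi0, Fin.le_def])
  have hnS : ‖S‖ ≤ Real.sqrt (lam i0) :=
    norm_sqrt_le A S lam W hW hAeig hSsymm hSS (lam i0) (hlam_nonneg i0) hlamle
  have hnP : ‖Bᵀ * G⁻¹‖ ≤ 1 / σ := norm_pinv_le B G hGBB hGdet σ hσpos hσlb
  -- factorization
  have hfactor : A * X * G⁻¹ = S * (Bᵀ * G⁻¹) := by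
    rw [hBt, ← hSS]
    simp only [Matrix.mul_assoc]
  have hmain : spectralNorm' (A * X * G⁻¹) ≤ Real.sqrt (lam i0) * (1 / σ) := by
    have h0 : spectralNorm' (A * X * G⁻¹) = ‖A * X * G⁻¹‖ := rfl
    rw [h0, hfactor]
    calc ‖S * (Bᵀ * G⁻¹)‖ ≤ ‖S‖ * ‖Bᵀ * G⁻¹‖ := Matrix.l2_opNorm_mul _ _
      _ ≤ Real.sqrt (lam i0) * (1 / σ) := by
          apply mul_le_mul hnS hnP (norm_nonneg _) (Real.sqrt_nonneg _)
  refine ⟨hlamk, hσpos, ?_⟩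
  have hrhs : Real.sqrt (lam i0 / lam ik) * (Real.sqrt (lam ik) / σ)
      = Real.sqrt (lam i0) * (1 / σ) := by
    rw [Real.sqrt_div (hlam_nonneg i0)]
    have hsk : Real.sqrt (lam ik) ≠ 0 := by
      exact ne_of_gt (Real.sqrt_pos.mpr hlamk)
    field_simp
  rw [hrhs]
  exact hmain
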